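/- Let (X,d) be a compact metric space, f_{1,∞} an NDS on X, ψ ∈ C(X,ℝ), and Z a nonempty compact subset of X. Then for every Borel probability measure μ on X with μ(Z) = 1 one has P_μ(X,ψ) ≤ P^B_{f_{1,∞}}(Z,ψ); i.e., P^B_{f_{1,∞}}(Z,ψ) ≥ sup{ P_μ(X,ψ) : μ a Borel probability measure with μ(Z) = 1 }. -/

import Mathlib

open Filter MeasureTheory Set ENNReal

noncomputable section

variable {X : Type} [MetricSpace X]

/-- The iterate `f_1^n = f_n ∘ ⋯ ∘ f_1` of the NDS `f`, where `f 0` is the first map `f_1`. -/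
def nIter (f : ℕ → X → X) : ℕ → X → X
  | 0 => id
  | n + 1 => f n ∘ nIter f n

/-- The Bowen (dynamical) ball `B_n(x, ε)` for the Bowen metric
`d_n(x,y) = max_{0 ≤ j < n} d(f_1^j x, f_1^j y)`. -/
def bowenBall (f : ℕ → X → X) (n : ℕ) (x : X) (ε : ℝ) : Set X :=
  {y | ∀ j < n, dist (nIter f j x) (nIter f j y) < ε}

/-- The Birkhoff sum `S_{1,n} ψ (x) = ∑_{j=0}^{n-1} ψ(f_1^j x)`. -/
def birkSum (f : ℕ → X → X) (ψ : X → ℝ) (n : ℕ) (x : X) : ℝ :=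
  ∑ j ∈ Finset.range n, ψ (nIter f j x)

/-- `S_{1,n} ψ (x, ε) = sup_{y ∈ B_n(x,ε)} S_{1,n} ψ (y)`. -/
def birkSupBall (f : ℕ → X → X) (ψ : X → ℝ) (n : ℕ) (x : X) (ε : ℝ) : ℝ :=
  sSup (birkSum f ψ n '' bowenBall f n x ε)

/-- `M(n, α, ε, Z, ψ)`: infimum of `∑_i exp(-α n_i + S_{1,n_i}ψ(x_i, ε))` over all finite or
countable covers `Z ⊆ ⋃_i B_{n_i}(x_i, ε)` with `n_i ≥ n`. -/
def Mpre (f : ℕ → X → X) (ψ : X → ℝ) (Z : Set X) (n : ℕ) (α ε : ℝ) : ℝ≥0∞ :=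
  sInf { S : ℝ≥0∞ | ∃ (u : Set ℕ) (c : ℕ → X) (m : ℕ → ℕ),
    (∀ i ∈ u, n ≤ m i) ∧ (Z ⊆ ⋃ i ∈ u, bowenBall f (m i) (c i) ε) ∧
    S = ∑' i : u, ENNReal.ofReal (Real.exp (-α * (m i : ℝ) + birkSupBall f ψ (m i) (c i) ε)) }

/-- `𝓜(n, α, ε, Z, ψ)`: as `Mpre` but with the Birkhoff sums evaluated at the centers. -/
def MpreC (f : ℕ → X → X) (ψ : X → ℝ) (Z : Set X) (n : ℕ) (α ε : ℝ) : ℝ≥0∞ :=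
  sInf { S : ℝ≥0∞ | ∃ (u : Set ℕ) (c : ℕ → X) (m : ℕ → ℕ),
    (∀ i ∈ u, n ≤ m i) ∧ (Z ⊆ ⋃ i ∈ u, bowenBall f (m i) (c i) ε) ∧
    S = ∑' i : u, ENNReal.ofReal (Real.exp (-α * (m i : ℝ) + birkSum f ψ (m i) (c i))) }

/-- `M(α, ε, Z, ψ) = lim_{n→∞} M(n, α, ε, Z, ψ)`; the quantity is nondecreasing in `n`,
so the limit is the supremum. -/
def Mlim (f : ℕ → X → X) (ψ : X → ℝ) (Z : Set X) (α ε : ℝ) : ℝ≥0∞ :=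
  ⨆ n : ℕ, Mpre f ψ Z n α ε

/-- `𝓜(α, ε, Z, ψ) = lim_{n→∞} 𝓜(n, α, ε, Z, ψ)`. -/
def MlimC (f : ℕ → X → X) (ψ : X → ℝ) (Z : Set X) (α ε : ℝ) : ℝ≥0∞ :=
  ⨆ n : ℕ, MpreC f ψ Z n α ε

/-- `P^B(ε, Z, ψ) = inf {α : M(α, ε, Z, ψ) = 0}`, as an extended real. -/
def PBeps (f : ℕ → X → X) (ψ : X → ℝ) (Z : Set X) (ε : ℝ) : EReal :=
  sInf (Real.toEReal '' {α : ℝ | Mlim f ψ Z α ε = 0})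

/-- `𝒫^B(ε, Z, ψ) = inf {α : 𝓜(α, ε, Z, ψ) = 0}`. -/
def PBCeps (f : ℕ → X → X) (ψ : X → ℝ) (Z : Set X) (ε : ℝ) : EReal :=
  sInf (Real.toEReal '' {α : ℝ | MlimC f ψ Z α ε = 0})

/-- The Pesin–Pitskel topological pressure `P^B_{f_{1,∞}}(Z, ψ) = lim_{ε→0} P^B(ε, Z, ψ)`. -/
def PB (f : ℕ → X → X) (ψ : X → ℝ) (Z : Set X) : EReal :=
  limUnder (nhdsWithin 0 (Ioi 0)) fun ε : ℝ => PBeps f ψ Z ε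

/-- `W(n, α, ε, Z, ψ)`: the weighted analogue of `Mpre`. -/
def Wpre (f : ℕ → X → X) (ψ : X → ℝ) (Z : Set X) (n : ℕ) (α ε : ℝ) : ℝ≥0∞ :=
  sInf { S : ℝ≥0∞ | ∃ (u : Set ℕ) (cx : ℕ → X) (m : ℕ → ℕ) (c : ℕ → ℝ),
    (∀ i ∈ u, 0 < c i) ∧ (∀ i ∈ u, n ≤ m i) ∧
    (∀ z ∈ Z, 1 ≤ ∑' i : u,
      (bowenBall f (m i) (cx i) ε).indicator (fun _ => ENNReal.ofReal (c i)) z) ∧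
    S = ∑' i : u, ENNReal.ofReal (c i) *
      ENNReal.ofReal (Real.exp (-α * (m i : ℝ) + birkSupBall f ψ (m i) (cx i) ε)) }

/-- `W(α, ε, Z, ψ) = lim_{n→∞} W(n, α, ε, Z, ψ)`. -/
def Wlim (f : ℕ → X → X) (ψ : X → ℝ) (Z : Set X) (α ε : ℝ) : ℝ≥0∞ :=
  ⨆ n : ℕ, Wpre f ψ Z n α ε

/-- `P^W(ε, Z, ψ)`: the critical value of `α` at which `W(α, ε, Z, ψ)` jumps from `∞` to `0`. -/
def PWeps (f : ℕ → X → X) (ψ : X → ℝ) (Z : Set X) (ε : ℝ) : EReal :=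
  sInf (Real.toEReal '' {α : ℝ | Wlim f ψ Z α ε = 0})

/-- The weighted topological pressure `P^W_{f_{1,∞}}(Z, ψ) = lim_{ε→0} P^W(ε, Z, ψ)`. -/
def PW (f : ℕ → X → X) (ψ : X → ℝ) (Z : Set X) : EReal :=
  limUnder (nhdsWithin 0 (Ioi 0)) fun ε : ℝ => PWeps f ψ Z ε

/-- Bowen topological entropy `h^B_top(f_{1,∞}, Z)`, i.e. pressure of the zero potential. -/
def hBtop (f : ℕ → X → X) (Z : Set X) : EReal := PB f (fun _ => 0) Z

/-- Weighted Bowen topological entropy `h^{WB}_top(f_{1,∞}, Z)`. -/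
def hWBtop (f : ℕ → X → X) (Z : Set X) : EReal := PW f (fun _ => 0) Z

/-- `EReal → ℝ≥0∞`, sending `⊤` to `⊤` and everything negative to `0`. -/
def ERealToENNReal (x : EReal) : ℝ≥0∞ := if x = ⊤ then ⊤ else ENNReal.ofReal x.toReal

variable [MeasurableSpace X]

/-- The measure-theoretic local pressure
`P_μ(x,ψ) = lim_{ε→0} liminf_{n→∞} (-log μ(B_n(x,ε)) + S_{1,n}ψ(x))/n`. -/
def Ploc (f : ℕ → X → X) (μ : Measure X) (ψ : X → ℝ) (x : X) : EReal :=
  limUnder (nhdsWithin 0 (Ioi 0)) fun ε : ℝ =>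
    Filter.atTop.liminf fun n : ℕ =>
      (((n : ℝ)⁻¹ : ℝ) : EReal) *
        (-(ENNReal.log (μ (bowenBall f n x ε))) + ((birkSum f ψ n x : ℝ) : EReal))

/-- The integral of an extended-real-valued function: the difference of the lower integrals of
its positive and negative parts. -/
def ERealIntegral (μ : Measure X) (g : X → EReal) : EReal :=
  ((∫⁻ x, ERealToENNReal (g x) ∂μ : ℝ≥0∞) : EReal)
    - ((∫⁻ x, ERealToENNReal (-(g x)) ∂μ : ℝ≥0∞) : EReal)

/-- The measure-theoretic pressure `P_μ(X, ψ) = ∫ P_μ(x, ψ) dμ(x)`. -/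
def Pmeas (f : ℕ → X → X) (μ : Measure X) (ψ : X → ℝ) : EReal :=
  ERealIntegral μ (Ploc f μ ψ)

/-- The measure-theoretic local lower entropy `h̲_μ(f_{1,∞}, x)`. -/
def hloc (f : ℕ → X → X) (μ : Measure X) (x : X) : EReal := Ploc f μ (fun _ => 0) x

/-- The measure-theoretic lower entropy `h̲_μ(f_{1,∞}) = ∫ h̲_μ(f_{1,∞}, x) dμ(x)`. -/
def hmeas (f : ℕ → X → X) (μ : Measure X) : EReal := Pmeas f μ (fun _ => 0)


set_option linter.unusedSectionVars false
set_option linter.unusedVariables false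
set_option maxHeartbeats 1000000

lemma mem_bowenBall_self {f : ℕ → X → X} {n : ℕ} {x : X} {ε : ℝ} (hε : 0 < ε) :
    x ∈ bowenBall f n x ε := fun j _ => by simpa using hε

lemma bowenBall_mono {f : ℕ → X → X} {n : ℕ} {x : X} {ε ε' : ℝ} (h : ε ≤ ε') :
    bowenBall f n x ε ⊆ bowenBall f n x ε' :=
  fun _ hy j hj => lt_of_lt_of_le (hy j hj) h

lemma bowenBall_subset_double {f : ℕ → X → X} {n : ℕ} {x y : X} {ε ε₀ : ℝ}
    (hy : y ∈ bowenBall f n x ε) (h : 2 * ε ≤ ε₀) :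
    bowenBall f n x ε ⊆ bowenBall f n y ε₀ := by
  intro z hz j hj
  calc dist (nIter f j y) (nIter f j z)
      ≤ dist (nIter f j x) (nIter f j y) + dist (nIter f j x) (nIter f j z) :=
        dist_triangle_left _ _ _
    _ < ε + ε := add_lt_add (hy j hj) (hz j hj)
    _ ≤ ε₀ := by linarith

lemma birkSum_le_of_bound {f : ℕ → X → X} {ψ : X → ℝ} {C : ℝ} (hC : ∀ x, |ψ x| ≤ C)
    (n : ℕ) (x : X) : birkSum f ψ n x ≤ n * C := by
  calc birkSum f ψ n x ≤ ∑ _j ∈ Finset.range n, C :=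
        Finset.sum_le_sum fun j _ => (abs_le.1 (hC _)).2
    _ = n * C := by simp [Finset.sum_const, Finset.card_range, nsmul_eq_mul]

lemma bddAbove_birkSum_image {f : ℕ → X → X} {ψ : X → ℝ} {C : ℝ} (hC : ∀ x, |ψ x| ≤ C)
    (n : ℕ) (S : Set X) : BddAbove (birkSum f ψ n '' S) := by
  refine ⟨n * C, ?_⟩
  rintro _ ⟨y, -, rfl⟩
  exact birkSum_le_of_bound hC n y

lemma le_birkSupBall {f : ℕ → X → X} {ψ : X → ℝ} {C : ℝ} (hC : ∀ x, |ψ x| ≤ C)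
    {n : ℕ} {x y : X} {ε : ℝ} (hy : y ∈ bowenBall f n x ε) :
    birkSum f ψ n y ≤ birkSupBall f ψ n x ε :=
  le_csSup (bddAbove_birkSum_image hC n _) (Set.mem_image_of_mem _ hy)

lemma birkSupBall_le {f : ℕ → X → X} {ψ : X → ℝ} {n : ℕ} {x : X} {ε r : ℝ}
    (hε : 0 < ε) (h : ∀ y ∈ bowenBall f n x ε, birkSum f ψ n y ≤ r) :
    birkSupBall f ψ n x ε ≤ r := by
  apply csSup_le ⟨_, Set.mem_image_of_mem _ (mem_bowenBall_self hε)⟩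
  rintro _ ⟨y, hy, rfl⟩
  exact h y hy

lemma EReal_exists_coe {x : EReal} (h1 : x ≠ ⊥) (h2 : x ≠ ⊤) : ∃ l : ℝ, x = (l : EReal) := by
  induction x using EReal.rec with
  | bot => exact absurd rfl h1
  | coe l => exact ⟨l, rfl⟩
  | top => exact absurd rfl h2

lemma MpreC_le_Mpre {f : ℕ → X → X} {ψ : X → ℝ} {C : ℝ} (hC : ∀ x, |ψ x| ≤ C)
    {Z : Set X} {n : ℕ} {α ε : ℝ} (hε : 0 < ε) :
    MpreC f ψ Z n α ε ≤ Mpre f ψ Z n α ε := by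
  refine le_sInf ?_
  rintro S ⟨u, c, m, h1, h2, rfl⟩
  refine le_trans (sInf_le ⟨u, c, m, h1, h2, rfl⟩) ?_
  refine ENNReal.tsum_le_tsum fun i => ?_
  apply ENNReal.ofReal_le_ofReal
  apply Real.exp_le_exp.2
  have := le_birkSupBall (f := f) (ψ := ψ) hC
    (mem_bowenBall_self (f := f) (n := m i) (x := c i) hε)
  linarith

lemma Mpre_shift_le_MpreC {f : ℕ → X → X} {ψ : X → ℝ}
    {Z : Set X} {n : ℕ} {α ε δ : ℝ} (hε : 0 < ε)
    (hmod : ∀ a b : X, dist a b < ε → |ψ a - ψ b| ≤ δ) :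
    Mpre f ψ Z n (α + δ) ε ≤ MpreC f ψ Z n α ε := by
  refine le_sInf ?_
  rintro S ⟨u, c, m, h1, h2, rfl⟩
  refine le_trans (sInf_le ⟨u, c, m, h1, h2, rfl⟩) ?_
  refine ENNReal.tsum_le_tsum fun i => ?_
  apply ENNReal.ofReal_le_ofReal
  apply Real.exp_le_exp.2
  have hsup : birkSupBall f ψ (m i) (c i) ε ≤ birkSum f ψ (m i) (c i) + (m i : ℝ) * δ := by
    apply birkSupBall_le hε
    intro y hy
    have hterm : ∀ j ∈ Finset.range (m i), ψ (nIter f j y) ≤ ψ (nIter f j (c i)) + δ := by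
      intro j hj
      have hd := hy j (Finset.mem_range.1 hj)
      have habs := abs_le.1 (hmod _ _ hd)
      linarith
    calc birkSum f ψ (m i) y ≤ ∑ j ∈ Finset.range (m i), (ψ (nIter f j (c i)) + δ) :=
          Finset.sum_le_sum hterm
      _ = birkSum f ψ (m i) (c i) + (m i : ℝ) * δ := by
          rw [Finset.sum_add_distrib]
          simp [birkSum, Finset.sum_const, Finset.card_range, nsmul_eq_mul]
  linarith

lemma MpreC_anti {f : ℕ → X → X} {ψ : X → ℝ} {Z : Set X} {n : ℕ} {α : ℝ} {ε ε' : ℝ}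
    (h : ε' ≤ ε) : MpreC f ψ Z n α ε ≤ MpreC f ψ Z n α ε' := by
  apply sInf_le_sInf
  rintro S ⟨u, c, m, h1, h2, rfl⟩
  exact ⟨u, c, m, h1, h2.trans (Set.iUnion₂_mono fun i _ => bowenBall_mono h), rfl⟩

lemma MlimC_le_Mlim {f : ℕ → X → X} {ψ : X → ℝ} {C : ℝ} (hC : ∀ x, |ψ x| ≤ C)
    {Z : Set X} {α ε : ℝ} (hε : 0 < ε) : MlimC f ψ Z α ε ≤ Mlim f ψ Z α ε :=
  iSup_mono fun _ => MpreC_le_Mpre hC hε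

lemma Mlim_shift_le_MlimC {f : ℕ → X → X} {ψ : X → ℝ} {Z : Set X} {α ε δ : ℝ} (hε : 0 < ε)
    (hmod : ∀ a b : X, dist a b < ε → |ψ a - ψ b| ≤ δ) :
    Mlim f ψ Z (α + δ) ε ≤ MlimC f ψ Z α ε :=
  iSup_mono fun _ => Mpre_shift_le_MpreC hε hmod

lemma MlimC_anti {f : ℕ → X → X} {ψ : X → ℝ} {Z : Set X} {α : ℝ} {ε ε' : ℝ} (h : ε' ≤ ε) :
    MlimC f ψ Z α ε ≤ MlimC f ψ Z α ε' :=
  iSup_mono fun _ => MpreC_anti h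

lemma PBCeps_le_PBeps {f : ℕ → X → X} {ψ : X → ℝ} {C : ℝ} (hC : ∀ x, |ψ x| ≤ C)
    {Z : Set X} {ε : ℝ} (hε : 0 < ε) : PBCeps f ψ Z ε ≤ PBeps f ψ Z ε := by
  apply sInf_le_sInf
  apply Set.image_mono
  intro α hα
  exact le_antisymm ((MlimC_le_Mlim hC hε).trans hα.le) (zero_le)

lemma PBCeps_antitoneOn (f : ℕ → X → X) (ψ : X → ℝ) (Z : Set X) :
    AntitoneOn (PBCeps f ψ Z) (Set.Ioi (0:ℝ)) := by
  intro ε' _ ε _ h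
  apply sInf_le_sInf
  apply Set.image_mono
  intro α hα
  exact le_antisymm ((MlimC_anti h).trans hα.le) (zero_le)

lemma tendsto_sSup_image_of_antitoneOn {g : ℝ → EReal} (hg : AntitoneOn g (Set.Ioi 0)) :
    Filter.Tendsto g (nhdsWithin 0 (Set.Ioi 0)) (nhds (sSup (g '' Set.Ioi 0))) := by
  refine tendsto_order.2 ⟨fun a ha => ?_, fun b hb => ?_⟩
  · obtain ⟨_, ⟨ε₀, hε₀, rfl⟩, hgt⟩ := lt_sSup_iff.1 ha
    filter_upwards [Ioc_mem_nhdsGT_of_mem (Set.mem_Ico.2 ⟨le_refl 0, hε₀⟩)] with ε hε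
    exact lt_of_lt_of_le hgt (hg hε.1 hε₀ hε.2)
  · filter_upwards [self_mem_nhdsWithin] with ε hε
    exact lt_of_le_of_lt (le_sSup (Set.mem_image_of_mem _ hε)) hb

lemma plocFun_antitoneOn (f : ℕ → X → X) (μ : Measure X) (ψ : X → ℝ) (x : X) :
    AntitoneOn (fun ε : ℝ =>
      Filter.atTop.liminf fun n : ℕ =>
        (((n : ℝ)⁻¹ : ℝ) : EReal) *
          (-(ENNReal.log (μ (bowenBall f n x ε))) + ((birkSum f ψ n x : ℝ) : EReal)))
      (Set.Ioi (0:ℝ)) := by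
  intro ε' _ ε _ h
  refine Filter.liminf_le_liminf (Filter.Eventually.of_forall fun n => ?_)
  refine mul_le_mul_of_nonneg_left ?_ ?_
  · refine add_le_add ?_ le_rfl
    rw [EReal.neg_le_neg_iff]
    exact ENNReal.log_le_log_iff.2 (measure_mono (bowenBall_mono h))
  · exact EReal.coe_nonneg.2 (inv_nonneg.2 (Nat.cast_nonneg n))

lemma Ploc_eq_sSup (f : ℕ → X → X) (μ : Measure X) (ψ : X → ℝ) (x : X) :
    Ploc f μ ψ x = sSup ((fun ε : ℝ =>
      Filter.atTop.liminf fun n : ℕ =>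
        (((n : ℝ)⁻¹ : ℝ) : EReal) *
          (-(ENNReal.log (μ (bowenBall f n x ε))) + ((birkSum f ψ n x : ℝ) : EReal)))
      '' Set.Ioi 0) :=
  (tendsto_sSup_image_of_antitoneOn (plocFun_antitoneOn f μ ψ x)).limUnder_eq

lemma ERealToENNReal_le_ofReal {y : EReal} {s : ℝ} (hs : 0 ≤ s) (h : y ≤ (s : EReal)) :
    ERealToENNReal y ≤ ENNReal.ofReal s := by
  rw [ERealToENNReal, if_neg (by rintro rfl; exact absurd h (not_le.2 (EReal.coe_lt_top s)))]
  apply ENNReal.ofReal_le_ofReal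
  induction y using EReal.rec with
  | bot => simpa using hs
  | coe t => simpa using EReal.coe_le_coe_iff.1 h
  | top => simp at h

lemma ERealToENNReal_eq_zero {y : EReal} (h : y ≤ 0) : ERealToENNReal y = 0 := by
  rw [ERealToENNReal, if_neg (by rintro rfl; simp at h)]
  rw [ENNReal.ofReal_eq_zero]
  induction y using EReal.rec with
  | bot => simp
  | coe t => simpa using EReal.coe_le_coe_iff.1 (by simpa using h)
  | top => simp at h

lemma ofReal_le_ERealToENNReal {y : EReal} {r : ℝ} (h : (r : EReal) ≤ y) :
    ENNReal.ofReal r ≤ ERealToENNReal y := by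
  rw [ERealToENNReal]
  split
  · exact le_top
  · apply ENNReal.ofReal_le_ofReal
    induction y using EReal.rec with
    | bot => simp at h
    | coe t => simpa using EReal.coe_le_coe_iff.1 h
    | top => simp_all

lemma Pmeas_le_of_ae (f : ℕ → X → X) (μ : Measure X) [IsProbabilityMeasure μ] (ψ : X → ℝ)
    {s : ℝ} (h : ∀ᵐ x ∂μ, Ploc f μ ψ x ≤ (s : EReal)) : Pmeas f μ ψ ≤ (s : EReal) := by
  rcases le_or_gt 0 s with hs | hs
  · have hA : (∫⁻ x, ERealToENNReal (Ploc f μ ψ x) ∂μ) ≤ ENNReal.ofReal s := by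
      calc (∫⁻ x, ERealToENNReal (Ploc f μ ψ x) ∂μ)
          ≤ ∫⁻ _, ENNReal.ofReal s ∂μ :=
            lintegral_mono_ae (h.mono fun x hx => ERealToENNReal_le_ofReal hs hx)
        _ = ENNReal.ofReal s := by simp
    calc Pmeas f μ ψ
        ≤ ((∫⁻ x, ERealToENNReal (Ploc f μ ψ x) ∂μ : ℝ≥0∞) : EReal) := by
          rw [Pmeas, ERealIntegral]
          have h0 : (0:EReal) ≤ ((∫⁻ x, ERealToENNReal (-(Ploc f μ ψ x)) ∂μ : ℝ≥0∞) : EReal) :=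
            EReal.coe_ennreal_nonneg _
          have := EReal.sub_le_sub
            (le_refl ((∫⁻ x, ERealToENNReal (Ploc f μ ψ x) ∂μ : ℝ≥0∞) : EReal)) h0
          simpa using this
      _ ≤ ((ENNReal.ofReal s : ℝ≥0∞) : EReal) := by
          exact_mod_cast EReal.coe_ennreal_le_coe_ennreal_iff.2 hA
      _ = (s : EReal) := by rw [EReal.coe_ennreal_ofReal, max_eq_left hs]
  · have hA : (∫⁻ x, ERealToENNReal (Ploc f μ ψ x) ∂μ) = 0 := by
      refine le_antisymm ?_ (zero_le)
      calc (∫⁻ x, ERealToENNReal (Ploc f μ ψ x) ∂μ)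
          ≤ ∫⁻ _, (0:ℝ≥0∞) ∂μ := lintegral_mono_ae (h.mono fun x hx =>
            (ERealToENNReal_eq_zero (hx.trans (EReal.coe_nonpos.2 hs.le))).le)
        _ = 0 := by simp
    have hB : ENNReal.ofReal (-s) ≤ (∫⁻ x, ERealToENNReal (-(Ploc f μ ψ x)) ∂μ) := by
      calc ENNReal.ofReal (-s) = ∫⁻ _, ENNReal.ofReal (-s) ∂μ := by simp
        _ ≤ ∫⁻ x, ERealToENNReal (-(Ploc f μ ψ x)) ∂μ :=
          lintegral_mono_ae (h.mono fun x hx => ofReal_le_ERealToENNReal (by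
            rw [EReal.coe_neg]
            exact EReal.neg_le_neg_iff.2 hx))
    rw [Pmeas, ERealIntegral, hA]
    have h1 : ((ENNReal.ofReal (-s) : ℝ≥0∞) : EReal)
        ≤ ((∫⁻ x, ERealToENNReal (-(Ploc f μ ψ x)) ∂μ : ℝ≥0∞) : EReal) :=
      EReal.coe_ennreal_le_coe_ennreal_iff.2 hB
    calc ((0 : ℝ≥0∞) : EReal) - ((∫⁻ x, ERealToENNReal (-(Ploc f μ ψ x)) ∂μ : ℝ≥0∞) : EReal)
        ≤ ((0 : ℝ≥0∞) : EReal) - ((ENNReal.ofReal (-s) : ℝ≥0∞) : EReal) :=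
          EReal.sub_le_sub le_rfl h1
      _ = (s : EReal) := by
          rw [EReal.coe_ennreal_ofReal, max_eq_left (neg_nonneg.2 hs.le),
            EReal.coe_ennreal_zero, ← EReal.coe_zero, ← EReal.coe_sub]
          norm_num

lemma measure_pos_of_lt_Pmeas (f : ℕ → X → X) (μ : Measure X) [IsProbabilityMeasure μ]
    (ψ : X → ℝ) {s : ℝ} (hs : (s : EReal) < Pmeas f μ ψ) :
    0 < μ {x | (s : EReal) < Ploc f μ ψ x} := by
  by_contra h
  push_neg at h
  have h0 : μ {x | (s : EReal) < Ploc f μ ψ x} = 0 := le_antisymm (by simpa using h) (zero_le)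
  have hae : ∀ᵐ x ∂μ, Ploc f μ ψ x ≤ (s : EReal) := by
    have hset : {x | ¬ Ploc f μ ψ x ≤ (s : EReal)} = {x | (s : EReal) < Ploc f μ ψ x} := by
      ext x; simp [not_le]
    rw [ae_iff, hset]
    exact h0
  exact absurd (Pmeas_le_of_ae f μ ψ hae) (not_le.2 hs)

lemma le_PBeps_of_measure_pos {f : ℕ → X → X} {ψ : X → ℝ} {C : ℝ} (hC : ∀ x, |ψ x| ≤ C)
    (μ : Measure X) [IsProbabilityMeasure μ] {Z : Set X} {s ε₀ : ℝ}
    (hA : 0 < μ {x | x ∈ Z ∧ (s : EReal) < (Filter.atTop.liminf fun n : ℕ =>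
        (((n : ℝ)⁻¹ : ℝ) : EReal) *
          (-(ENNReal.log (μ (bowenBall f n x ε₀))) + ((birkSum f ψ n x : ℝ) : EReal)))})
    {ε : ℝ} (hε : 0 < ε) (hεle : 2 * ε ≤ ε₀) :
    (s : EReal) ≤ PBeps f ψ Z ε := by
  refine le_sInf ?_
  rintro b ⟨α, hα, rfl⟩
  rw [Set.mem_setOf_eq] at hα
  show (s : EReal) ≤ (α : EReal)
  rw [EReal.coe_le_coe_iff]
  by_contra hcon
  push_neg at hcon
  set A := {x | x ∈ Z ∧ (s : EReal) < (Filter.atTop.liminf fun n : ℕ =>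
        (((n : ℝ)⁻¹ : ℝ) : EReal) *
          (-(ENNReal.log (μ (bowenBall f n x ε₀))) + ((birkSum f ψ n x : ℝ) : EReal)))} with hAdef
  set D : ℕ → Set X := fun N => {x | x ∈ A ∧ ∀ n, N ≤ n →
    μ (bowenBall f n x ε₀) ≤ ENNReal.ofReal (Real.exp (birkSum f ψ n x - α * n))} with hD
  have hsub : A ⊆ ⋃ N, D N := by
    intro x hx
    have hlim : (α : EReal) < (Filter.atTop.liminf fun n : ℕ =>
        (((n : ℝ)⁻¹ : ℝ) : EReal) *
          (-(ENNReal.log (μ (bowenBall f n x ε₀))) + ((birkSum f ψ n x : ℝ) : EReal))) :=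
      lt_trans (EReal.coe_lt_coe_iff.2 hcon) hx.2
    obtain ⟨N₀, hN₀⟩ := Filter.eventually_atTop.1 (Filter.eventually_lt_of_lt_liminf hlim)
    refine Set.mem_iUnion.2 ⟨N₀, hx, ?_⟩
    intro n hn
    rcases Nat.eq_zero_or_pos n with rfl | hnpos
    · have h1 : bowenBall f 0 x ε₀ = Set.univ := by
        ext y; simp [bowenBall]
      rw [h1, measure_univ]
      have : birkSum f ψ 0 x = 0 := by simp [birkSum]
      rw [this]
      norm_num
    · have hlt := hN₀ n hn
      rcases eq_or_ne (μ (bowenBall f n x ε₀)) 0 with h0 | h0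
      · rw [h0]; exact zero_le
      · have hlogbot : ENNReal.log (μ (bowenBall f n x ε₀)) ≠ ⊥ := by
          simpa using h0
        have hlogtop : ENNReal.log (μ (bowenBall f n x ε₀)) ≠ ⊤ := by
          simp only [ne_eq, ENNReal.log_eq_top_iff]
          exact (measure_lt_top μ _).ne
        obtain ⟨l, hl⟩ := EReal_exists_coe hlogbot hlogtop
        rw [hl, ← EReal.coe_neg, ← EReal.coe_add, ← EReal.coe_mul, EReal.coe_lt_coe_iff] at hlt
        have hn0 : (0:ℝ) < (n:ℝ) := by exact_mod_cast hnpos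
        have hl2 : l ≤ birkSum f ψ n x - α * n := by
          rw [inv_mul_eq_div, lt_div_iff₀ hn0] at hlt
          nlinarith
        calc μ (bowenBall f n x ε₀)
            = EReal.exp (ENNReal.log (μ (bowenBall f n x ε₀))) :=
              (ENNReal.exp_log _).symm
          _ ≤ EReal.exp ((birkSum f ψ n x - α * n : ℝ) : EReal) := by
              apply EReal.exp_monotone
              rw [hl]
              exact_mod_cast hl2
          _ = ENNReal.ofReal (Real.exp (birkSum f ψ n x - α * n)) := EReal.exp_coe _
  obtain ⟨N, hN⟩ : ∃ N, 0 < μ (D N) := by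
    by_contra h
    push_neg at h
    have hDz : ∀ N, μ (D N) = 0 := fun N => le_antisymm (h N) (zero_le)
    have : μ A = 0 := by
      refine le_antisymm ?_ (zero_le)
      calc μ A ≤ μ (⋃ N, D N) := measure_mono hsub
        _ ≤ ∑' N, μ (D N) := measure_iUnion_le _
        _ = 0 := by simp [hDz]
    exact absurd this hA.ne'
  have hMpre : Mpre f ψ Z N α ε = 0 :=
    le_antisymm (hα ▸ le_iSup (fun n => Mpre f ψ Z n α ε) N) (zero_le)
  have hlow : μ (D N) ≤ Mpre f ψ Z N α ε := by
    refine le_sInf ?_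
    rintro S ⟨u, c, m, hm, hcov, rfl⟩
    have hDsub : D N ⊆ ⋃ i ∈ u, (D N ∩ bowenBall f (m i) (c i) ε) := by
      intro x hx
      obtain ⟨i, hiu, hib⟩ := Set.mem_iUnion₂.1 (hcov hx.1.1)
      exact Set.mem_iUnion₂.2 ⟨i, hiu, hx, hib⟩
    calc μ (D N) ≤ μ (⋃ i ∈ u, (D N ∩ bowenBall f (m i) (c i) ε)) := measure_mono hDsub
      _ ≤ ∑' i : u, μ (D N ∩ bowenBall f (m i) (c i) ε) :=
          measure_biUnion_le μ u.to_countable _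
      _ ≤ ∑' i : u, ENNReal.ofReal
            (Real.exp (-α * (m i : ℝ) + birkSupBall f ψ (m i) (c i) ε)) := by
          refine ENNReal.tsum_le_tsum fun i => ?_
          rcases Set.eq_empty_or_nonempty (D N ∩ bowenBall f (m i) (c i) ε) with he | hne
          · rw [he]; simp
          · obtain ⟨y, hyD, hyB⟩ := hne
            calc μ (D N ∩ bowenBall f (m i) (c i) ε)
                ≤ μ (bowenBall f (m i) y ε₀) :=
                  measure_mono ((Set.inter_subset_right).trans
                    (bowenBall_subset_double hyB hεle))
              _ ≤ ENNReal.ofReal (Real.exp (birkSum f ψ (m i) y - α * (m i : ℝ))) :=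
                  hyD.2 (m i) (hm i i.2)
              _ ≤ _ := by
                  apply ENNReal.ofReal_le_ofReal
                  apply Real.exp_le_exp.2
                  have := le_birkSupBall (f := f) (ψ := ψ) hC hyB
                  linarith
  rw [hMpre] at hlow
  exact absurd (le_antisymm hlow (zero_le)) hN.ne'

/-- Lower bound half of the variational principle: for every Borel
probability measure `μ` with `μ(Z) = 1` one has `P_μ(X,ψ) ≤ P^B(Z,ψ)`; i.e. `P^B(Z,ψ)`
dominates the supremum of the measure-theoretic pressures. -/
theorem statement18 [CompactSpace X] [BorelSpace X]
    (f : ℕ → X → X) (hf : ∀ n, Continuous (f n)) (ψ : X → ℝ) (hψ : Continuous ψ)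
    (Z : Set X) (hZne : Z.Nonempty) (hZ : IsCompact Z) :
    (∀ μ : Measure X, IsProbabilityMeasure μ → μ Z = 1 → Pmeas f μ ψ ≤ PB f ψ Z) ∧
      (⨆ (μ : Measure X) (_ : IsProbabilityMeasure μ) (_ : μ Z = 1), Pmeas f μ ψ) ≤
        PB f ψ Z := by
  haveI : Nonempty X := ⟨hZne.choose⟩
  obtain ⟨z, -, hz⟩ := IsCompact.exists_isMaxOn isCompact_univ Set.univ_nonempty
    hψ.abs.continuousOn
  set C := |ψ z| with hCdef
  have hC : ∀ x, |ψ x| ≤ C := fun x => hz (Set.mem_univ x)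
  have hmod : ∀ δ : ℝ, 0 < δ → ∃ ε₁ > (0:ℝ), ∀ a b : X, dist a b < ε₁ → |ψ a - ψ b| ≤ δ := by
    intro δ hδ
    obtain ⟨ε₁, hε₁, h⟩ := Metric.uniformContinuous_iff.1
      (CompactSpace.uniformContinuous_of_continuous hψ) δ hδ
    exact ⟨ε₁, hε₁, fun a b hab => by
      have := h hab
      rw [Real.dist_eq] at this
      exact this.le⟩
  set L := sSup (PBCeps f ψ Z '' Set.Ioi 0) with hLdef
  have hTend : Filter.Tendsto (fun ε : ℝ => PBeps f ψ Z ε)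
      (nhdsWithin 0 (Set.Ioi 0)) (nhds L) := by
    refine tendsto_order.2 ⟨fun a ha => ?_, fun b hb => ?_⟩
    · obtain ⟨_, ⟨ε₀, hε₀, rfl⟩, hgt⟩ := lt_sSup_iff.1 ha
      filter_upwards [Ioc_mem_nhdsGT_of_mem (Set.mem_Ico.2 ⟨le_refl 0, hε₀⟩)] with ε hε
      calc a < PBCeps f ψ Z ε₀ := hgt
        _ ≤ PBCeps f ψ Z ε := PBCeps_antitoneOn f ψ Z hε.1 hε₀ hε.2
        _ ≤ PBeps f ψ Z ε := PBCeps_le_PBeps hC hε.1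
    · obtain ⟨r, hr1, hr2⟩ := EReal.exists_between_coe_real hb
      obtain ⟨r', hr1', hr2'⟩ := EReal.exists_between_coe_real hr2
      have hδ : 0 < r' - r := sub_pos.2 (EReal.coe_lt_coe_iff.1 hr1')
      obtain ⟨ε₁, hε₁, hmod1⟩ := hmod _ hδ
      filter_upwards [Ioc_mem_nhdsGT_of_mem (Set.mem_Ico.2 ⟨le_refl 0, hε₁⟩)] with ε hε
      have hlt : PBCeps f ψ Z ε < (r : EReal) :=
        lt_of_le_of_lt (le_sSup (Set.mem_image_of_mem _ hε.1)) hr1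
      obtain ⟨_, ⟨β, hβ, rfl⟩, hβr⟩ := sInf_lt_iff.1 hlt
      rw [Set.mem_setOf_eq] at hβ
      have hzero : Mlim f ψ Z (β + (r' - r)) ε = 0 :=
        le_antisymm ((Mlim_shift_le_MlimC hε.1 (fun a b hab => hmod1 a b (lt_of_lt_of_le hab hε.2))).trans hβ.le) (zero_le)
      have h1 : PBeps f ψ Z ε ≤ ((β + (r' - r) : ℝ) : EReal) :=
        sInf_le ⟨β + (r' - r), hzero, rfl⟩
      refine lt_of_le_of_lt h1 (lt_trans (EReal.coe_lt_coe_iff.2 ?_) hr2')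
      have := EReal.coe_lt_coe_iff.1 hβr
      linarith
  have hPB : PB f ψ Z = L := hTend.limUnder_eq
  have key : ∀ μ : Measure X, IsProbabilityMeasure μ → μ Z = 1 → Pmeas f μ ψ ≤ PB f ψ Z := by
    intro μ hμp hμZ
    haveI := hμp
    rw [hPB]
    by_contra hcon
    push_neg at hcon
    obtain ⟨s, hsL, hsP⟩ := EReal.exists_between_coe_real hcon
    have hpos : 0 < μ {x | (s : EReal) < Ploc f μ ψ x} := measure_pos_of_lt_Pmeas f μ ψ hsP
    set G := {x | (s : EReal) < Ploc f μ ψ x} with hGdef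
    have hZc : μ Zᶜ = 0 := by
      rw [measure_compl hZ.isClosed.measurableSet (measure_ne_top μ Z), measure_univ, hμZ]
      simp
    have hGZ : 0 < μ (G ∩ Z) := by
      have h1 : μ G ≤ μ (G ∩ Z) + μ (G \ Z) := measure_le_inter_add_diff μ G Z
      have h2 : μ (G \ Z) = 0 :=
        measure_mono_null (fun x hx => hx.2) hZc
      rw [h2, add_zero] at h1
      exact lt_of_lt_of_le hpos h1
    set Ak : ℕ → Set X := fun k =>
      {x | x ∈ Z ∧ (s : EReal) < (Filter.atTop.liminf fun n : ℕ =>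
        (((n : ℝ)⁻¹ : ℝ) : EReal) *
          (-(ENNReal.log (μ (bowenBall f n x (1 / ((k:ℝ) + 1))))) +
            ((birkSum f ψ n x : ℝ) : EReal)))} with hAk
    have hGsub : G ∩ Z ⊆ ⋃ k, Ak k := by
      rintro x ⟨hxG, hxZ⟩
      have hx : (s : EReal) < Ploc f μ ψ x := hxG
      rw [Ploc_eq_sSup] at hx
      obtain ⟨_, ⟨ε, hεpos, rfl⟩, hlt2⟩ := lt_sSup_iff.1 hx
      obtain ⟨k, hk⟩ := exists_nat_one_div_lt (Set.mem_Ioi.1 hεpos)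
      refine Set.mem_iUnion.2 ⟨k, hxZ, lt_of_lt_of_le hlt2 ?_⟩
      exact plocFun_antitoneOn f μ ψ x (Set.mem_Ioi.2 (by positivity)) hεpos hk.le
    obtain ⟨k, hk⟩ : ∃ k, 0 < μ (Ak k) := by
      by_contra h
      push_neg at h
      have hz0 : ∀ k, μ (Ak k) = 0 := fun k => le_antisymm (h k) (zero_le)
      have : μ (G ∩ Z) = 0 := by
        refine le_antisymm ?_ (zero_le)
        calc μ (G ∩ Z) ≤ μ (⋃ k, Ak k) := measure_mono hGsub
          _ ≤ ∑' k, μ (Ak k) := measure_iUnion_le _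
          _ = 0 := by simp [hz0]
      exact absurd this hGZ.ne'
    have hε₀pos : 0 < 1 / ((k:ℝ) + 1) := by positivity
    have hev : ∀ᶠ ε in nhdsWithin (0:ℝ) (Set.Ioi 0), (s : EReal) ≤ PBeps f ψ Z ε := by
      filter_upwards [Ioc_mem_nhdsGT_of_mem
        (Set.mem_Ico.2 ⟨le_refl (0:ℝ), half_pos hε₀pos⟩)] with ε hε
      exact le_PBeps_of_measure_pos hC μ hk hε.1 (by linarith [hε.2])
    exact absurd (ge_of_tendsto hTend hev) (not_le.2 hsL)
  exact ⟨key, iSup_le fun μ => iSup_le fun h1 => iSup_le fun h2 => key μ h1 h2⟩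

end
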